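/- Let P > 3 be an integer and define g(x) = (1 − x)² + (P − 1)·x·(1 − x + log x) for x ∈ (0,1). Then there exists a unique x* ∈ (0,1) such that g(x) > 0 for all x ∈ (0, x*) and g(x) < 0 for all x ∈ (x*, 1); in particular g(x*) = 0. -/

import Mathlib

open Set Real

/-- Lemma 3 (Uniqueness of the solution) of the paper: for `P > 3`, the function
`g(x) = (1-x)^2 + (P-1) x (1 - x + log x)` has a unique sign-change point
`x* ∈ (0,1)`, with `g > 0` on `(0, x*)`, `g < 0` on `(x*, 1)`, and `g(x*) = 0`. -/
theorem deo_g_unique_sign_change (P : ℕ) (hP : 3 < P) :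
    let g : ℝ → ℝ := fun x => (1 - x) ^ 2 + ((P : ℝ) - 1) * x * (1 - x + Real.log x)
    ∃! xstar, xstar ∈ Set.Ioo (0 : ℝ) 1 ∧
      (∀ x ∈ Set.Ioo (0 : ℝ) xstar, g x > 0) ∧
      (∀ x ∈ Set.Ioo xstar (1 : ℝ), g x < 0) ∧
      g xstar = 0 := by
  intro g
  have hN : (4 : ℝ) ≤ (P : ℝ) := by exact_mod_cast hP
  set c : ℝ := (P : ℝ) - 1 with hc
  set q : ℝ := (P : ℝ) - 2 with hq
  have hc0 : (0 : ℝ) < c := by simp only [hc]; linarith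
  have hq2 : (2 : ℝ) ≤ q := by simp only [hq]; linarith
  have hq0 : (0 : ℝ) < q := by linarith
  set x₀ : ℝ := q⁻¹ with hx₀
  have hx₀pos : 0 < x₀ := inv_pos.2 hq0
  have hx₀half : x₀ ≤ 1 / 2 := by
    rw [hx₀, inv_le_comm₀ hq0 (by norm_num)]
    norm_num; linarith
  -- the auxiliary function h with g x = x * h x
  set h : ℝ → ℝ := fun x => (1 - x) ^ 2 / x + c * (1 - x + Real.log x) with hh
  have hgh : ∀ x : ℝ, 0 < x → g x = x * h x := by
    intro x hx
    simp only [hh, g]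
    field_simp
    ring
  -- derivative of h
  have hd : ∀ x : ℝ, 0 < x → HasDerivAt h ((1 - x) * (q * x - 1) / x ^ 2) x := by
    intro x hx
    have h1 : HasDerivAt (fun y : ℝ => (1 - y) ^ 2) (2 * (1 - x) * (-1)) x := by
      have := ((hasDerivAt_id x).const_sub 1).fun_pow 2
      simpa using this
    have h2 : HasDerivAt (fun y : ℝ => (1 - y) ^ 2 / y)
        ((2 * (1 - x) * (-1) * x - (1 - x) ^ 2 * 1) / x ^ 2) x :=
      h1.div (hasDerivAt_id x) hx.ne'
    have h3 : HasDerivAt (fun y : ℝ => 1 - y + Real.log y) (-1 + x⁻¹) x := by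
      have := ((hasDerivAt_id x).const_sub 1).fun_add (Real.hasDerivAt_log hx.ne')
      simpa using this
    have h4 := h2.fun_add (h3.const_mul c)
    refine h4.congr_deriv ?_
    have hx2 : x ^ 2 ≠ 0 := pow_ne_zero 2 hx.ne'
    field_simp
    simp only [hc, hq]
    ring
  have hcont : ∀ s : Set ℝ, (∀ x ∈ s, (0:ℝ) < x) → ContinuousOn h s := by
    intro s hs x hx
    exact ((hd x (hs x hx)).continuousAt).continuousWithinAt
  -- strict antitone on Ioc 0 x₀
  have hanti : StrictAntiOn h (Ioc 0 x₀) := by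
    apply strictAntiOn_of_deriv_neg (convex_Ioc 0 x₀)
      (hcont _ (fun x hx => hx.1))
    intro x hx
    rw [interior_Ioc] at hx
    rw [(hd x hx.1).deriv]
    apply div_neg_of_neg_of_pos
    · apply mul_neg_of_pos_of_neg
      · nlinarith [hx.2, hx₀half]
      · have hlt : x < q⁻¹ := hx.2
        have := (mul_lt_mul_iff_right₀ hq0).2 hlt
        rw [mul_inv_cancel₀ hq0.ne'] at this
        linarith
    · exact pow_pos hx.1 2
  -- strict monotone on Icc x₀ 1
  have hmono : StrictMonoOn h (Icc x₀ 1) := by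
    apply strictMonoOn_of_deriv_pos (convex_Icc x₀ 1)
      (hcont _ (fun x hx => lt_of_lt_of_le hx₀pos hx.1))
    intro x hx
    rw [interior_Icc] at hx
    rw [(hd x (lt_trans hx₀pos hx.1)).deriv]
    apply div_pos
    · apply mul_pos
      · linarith [hx.2]
      · have hlt : q⁻¹ < x := hx.1
        have := (mul_lt_mul_iff_right₀ hq0).2 hlt
        rw [mul_inv_cancel₀ hq0.ne'] at this
        linarith
    · exact pow_pos (lt_trans hx₀pos hx.1) 2
  have h1eq : h 1 = 0 := by simp [hh]
  have hx₀lt1 : x₀ < 1 := by linarith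
  have hx₀neg : h x₀ < 0 := by
    have := hmono (left_mem_Icc.2 hx₀lt1.le) (right_mem_Icc.2 hx₀lt1.le) hx₀lt1
    rwa [h1eq] at this
  have hPpos : (0:ℝ) < (P:ℝ) := by linarith
  set a : ℝ := ((P:ℝ)^3)⁻¹ with ha
  have hapos : 0 < a := by positivity
  clear_value c q x₀ a
  have h64 : (64:ℝ) ≤ (P:ℝ)^3 := by
    have : (4:ℝ)^3 ≤ (P:ℝ)^3 := pow_le_pow_left₀ (by norm_num) hN 3
    linarith
  have hcube : (P:ℝ) ≤ (P:ℝ)^3 := le_self_pow₀ (by linarith) (by norm_num)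
  have ha64 : a ≤ 1/64 := by
    calc a ≤ (64:ℝ)⁻¹ := by
            rw [ha]; exact inv_anti₀ (by norm_num) h64
      _ = 1/64 := by norm_num
  have halt : a < x₀ := by
    rw [ha, hx₀]
    apply inv_strictAnti₀ hq0
    simp only [hq]; linarith
  have hloga : Real.log a = -(3 * Real.log P) := by
    rw [ha, Real.log_inv, Real.log_pow]; push_cast; ring
  have hlogP : Real.log P ≤ (P:ℝ) - 1 := Real.log_le_sub_one_of_pos hPpos
  have hlogPpos : 0 < Real.log P := Real.log_pos (by linarith)
  have hga : 0 < g a := by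
    have key : -(3 * Real.log P) ≤ 1 - a + Real.log a := by
      rw [hloga]; linarith
    have h5 : -(c * a * (3 * Real.log P)) ≤ c * a * (1 - a + Real.log a) := by
      calc -(c * a * (3 * Real.log P)) = c * a * (-(3 * Real.log P)) := by ring
        _ ≤ c * a * (1 - a + Real.log a) :=
            mul_le_mul_of_nonneg_left key (mul_nonneg hc0.le hapos.le)
    have h6 : c * a * (3 * Real.log P) ≤ 3 / 4 := by
      have e : c * a * (3 * Real.log P) = (c * (3 * Real.log P)) / (P:ℝ)^3 := by
        rw [ha]; ring
      rw [e, div_le_iff₀ (by positivity : (0:ℝ) < (P:ℝ)^3)]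
      simp only [hc]
      nlinarith [hlogP, hlogPpos, hN, sq_nonneg ((P:ℝ) - 1)]
    have h7 : (3:ℝ)/4 < (1 - a)^2 := by nlinarith
    have : 0 < (1 - a)^2 + c * a * (1 - a + Real.log a) := by linarith
    simpa only [g, hc] using this
  have hha : 0 < h a := by
    have he := hgh a hapos
    by_contra hle
    push_neg at hle
    nlinarith [mul_nonpos_of_nonneg_of_nonpos hapos.le hle]
  -- intermediate value theorem
  obtain ⟨xs, hxs, hxs0⟩ :=
    intermediate_value_Icc' halt.le
      (hcont _ (fun x hx => lt_of_lt_of_le hapos hx.1)) ⟨hx₀neg.le, hha.le⟩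
  have hxsa : a < xs := by
    rcases eq_or_lt_of_le hxs.1 with heq | h'
    · rw [← heq] at hxs0; exact absurd hxs0 (ne_of_gt hha)
    · exact h'
  have hxsx₀ : xs < x₀ := by
    rcases eq_or_lt_of_le hxs.2 with heq | h'
    · rw [heq] at hxs0; exact absurd hxs0 (ne_of_lt hx₀neg)
    · exact h'
  have hxspos : 0 < xs := lt_trans hapos hxsa
  have hxs01 : xs ∈ Ioo (0:ℝ) 1 := ⟨hxspos, lt_trans hxsx₀ hx₀lt1⟩
  have hpos : ∀ x ∈ Ioo (0:ℝ) xs, g x > 0 := by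
    intro x hx
    rw [hgh x hx.1]
    have hlt : h xs < h x :=
      hanti ⟨hx.1, le_of_lt (lt_trans hx.2 hxsx₀)⟩ ⟨hxspos, hxsx₀.le⟩ hx.2
    rw [hxs0] at hlt
    exact mul_pos hx.1 hlt
  have hneg : ∀ x ∈ Ioo xs (1:ℝ), g x < 0 := by
    intro x hx
    have hxpos : 0 < x := lt_trans hxspos hx.1
    rw [hgh x hxpos]
    rcases le_or_gt x x₀ with hle | hlt
    · have hlt2 : h x < h xs := hanti ⟨hxspos, hxsx₀.le⟩ ⟨hxpos, hle⟩ hx.1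
      rw [hxs0] at hlt2
      exact mul_neg_of_pos_of_neg hxpos hlt2
    · have hlt2 : h x < h 1 :=
        hmono ⟨hlt.le, hx.2.le⟩ (right_mem_Icc.2 hx₀lt1.le) hx.2
      rw [h1eq] at hlt2
      exact mul_neg_of_pos_of_neg hxpos hlt2
  have hzero : g xs = 0 := by rw [hgh xs hxspos, hxs0, mul_zero]
  refine ⟨xs, ⟨hxs01, hpos, hneg, hzero⟩, ?_⟩
  rintro y ⟨hy01, hypos, hyneg, hyzero⟩
  by_contra hne
  rcases lt_or_gt_of_ne hne with hlt | hgt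
  · have := hpos y ⟨hy01.1, hlt⟩
    exact absurd hyzero (ne_of_gt this)
  · have := hypos xs ⟨hxspos, hgt⟩
    exact absurd hzero (ne_of_gt this)
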